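/- Let g be a Riemannian metric on ℝⁿ, complete, such that V(x) = d_g(x,0)² is C¹. Let f(x,u) = a(x) + B(x,u)u be a control system weakly contractive with respect to g, with a(0) = 0. Then L_a V(x) ≤ 0 for all x, i.e., the drift vector field a is weakly dissipative for the squared distance to the origin. -/

import Mathlib

open Matrix Set

/-- Riemannian length of the restriction to `[0,1]` of a path `γ`, for the
metric given by the field of bilinear forms `G`. -/
noncomputable def pathLengthG (n : ℕ)
    (G : (Fin n → ℝ) → (Fin n → ℝ) → (Fin n → ℝ) → ℝ)
    (γ : ℝ → Fin n → ℝ) : ℝ :=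
  ∫ s in (0:ℝ)..1, Real.sqrt (G (γ s) (deriv γ s) (deriv γ s))

/-- Riemannian distance associated with the metric `G`. -/
noncomputable def riemDistG (n : ℕ)
    (G : (Fin n → ℝ) → (Fin n → ℝ) → (Fin n → ℝ) → ℝ)
    (x y : Fin n → ℝ) : ℝ :=
  sInf {l : ℝ | ∃ γ : ℝ → Fin n → ℝ,
    ContDiff ℝ 1 γ ∧ γ 0 = x ∧ γ 1 = y ∧ l = pathLengthG n G γ}

/-- Lie derivative of the metric `G` along a vector field `F`. -/
noncomputable def lieDerivG (n : ℕ)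
    (G : (Fin n → ℝ) → (Fin n → ℝ) → (Fin n → ℝ) → ℝ)
    (F : (Fin n → ℝ) → Fin n → ℝ) (x φ ψ : Fin n → ℝ) : ℝ :=
  fderiv ℝ (fun y => G y φ ψ) x (F x)
    + G x (fderiv ℝ F x φ) ψ + G x φ (fderiv ℝ F x ψ)

section AuxBasic

variable {n : ℕ} {G : (Fin n → ℝ) → (Fin n → ℝ) → (Fin n → ℝ) → ℝ}

lemma pathLengthG_nonneg (γ : ℝ → Fin n → ℝ) : 0 ≤ pathLengthG n G γ :=
  intervalIntegral.integral_nonneg (by norm_num) (fun u _ => Real.sqrt_nonneg _)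

lemma distSet_nonempty (x y : Fin n → ℝ) :
    {l : ℝ | ∃ γ : ℝ → Fin n → ℝ,
      ContDiff ℝ 1 γ ∧ γ 0 = x ∧ γ 1 = y ∧ l = pathLengthG n G γ}.Nonempty := by
  refine ⟨pathLengthG n G (fun s => x + s • (y - x)), fun s => x + s • (y - x), ?_, by simp, by simp, rfl⟩
  exact contDiff_const.add ((contDiff_id (𝕜 := ℝ)).smul contDiff_const)

lemma riemDistG_nonneg (x y : Fin n → ℝ) : 0 ≤ riemDistG n G x y :=
  le_csInf (distSet_nonempty x y) (by rintro l ⟨γ, -, -, -, rfl⟩; exact pathLengthG_nonneg γ)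

lemma riemDistG_le {γ : ℝ → Fin n → ℝ} (hγ : ContDiff ℝ 1 γ) {x y : Fin n → ℝ}
    (h0 : γ 0 = x) (h1 : γ 1 = y) : riemDistG n G x y ≤ pathLengthG n G γ :=
  csInf_le ⟨0, by rintro l ⟨γ', -, -, -, rfl⟩; exact pathLengthG_nonneg γ'⟩ ⟨γ, hγ, h0, h1, rfl⟩

lemma exists_path_lt (x y : Fin n → ℝ) {ε : ℝ} (hε : 0 < ε) :
    ∃ γ : ℝ → Fin n → ℝ, ContDiff ℝ 1 γ ∧ γ 0 = x ∧ γ 1 = y ∧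
      pathLengthG n G γ < riemDistG n G x y + ε := by
  obtain ⟨l, ⟨γ, h1, h2, h3, rfl⟩, hl⟩ := Real.lt_sInf_add_pos (distSet_nonempty (G := G) x y) hε
  exact ⟨γ, h1, h2, h3, hl⟩

end AuxBasic

section AuxExpand

variable {n : ℕ} {G : (Fin n → ℝ) → (Fin n → ℝ) → (Fin n → ℝ) → ℝ}
  (hGsymm : ∀ x φ ψ, G x φ ψ = G x ψ φ)
  (hGlin : ∀ x ψ, IsLinearMap ℝ (fun φ => G x φ ψ))

include hGsymm hGlin

lemma G_smul_smul (x v : Fin n → ℝ) (c : ℝ) : G x (c • v) (c • v) = c ^ 2 * G x v v := by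
  have h1 : G x (c • v) (c • v) = c * G x v (c • v) := by
    simpa using (hGlin x (c • v)).map_smul c v
  have h2 : G x (c • v) v = c * G x v v := by simpa using (hGlin x v).map_smul c v
  rw [h1, hGsymm x v (c • v), h2, hGsymm x v]; ring

lemma G_expand (x v w : Fin n → ℝ) :
    G x v w = ∑ i, ∑ j, v i * w j * G x (Pi.single i 1) (Pi.single j 1) := by
  have hv : v = ∑ i, v i • (Pi.single i 1 : Fin n → ℝ) := by
    conv_lhs => rw [← Finset.univ_sum_single v]
    refine Finset.sum_congr rfl fun i _ => ?_
    ext j; by_cases h : i = j <;> simp [Pi.single_apply, h]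
  have key : ∀ (ψ : Fin n → ℝ) (f : Fin n → (Fin n → ℝ)),
      G x (∑ i, f i) ψ = ∑ i, G x (f i) ψ := fun ψ f => map_sum ((hGlin x ψ).mk' _) f Finset.univ
  conv_lhs => rw [hv]
  rw [key]
  refine Finset.sum_congr rfl fun i _ => ?_
  have h1 : G x (v i • (Pi.single i 1 : Fin n → ℝ)) w = v i * G x (Pi.single i 1) w := by
    simpa using (hGlin x w).map_smul (v i) _
  rw [h1, hGsymm x _ w]
  have hw : w = ∑ j, w j • (Pi.single j 1 : Fin n → ℝ) := by
    conv_lhs => rw [← Finset.univ_sum_single w]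
    refine Finset.sum_congr rfl fun j _ => ?_
    ext k; by_cases h : j = k <;> simp [Pi.single_apply, h]
  conv_lhs => rw [hw, key]
  rw [Finset.mul_sum]
  refine Finset.sum_congr rfl fun j _ => ?_
  have h2 : G x (w j • (Pi.single j 1 : Fin n → ℝ)) (Pi.single i 1) = w j * G x (Pi.single j 1) (Pi.single i 1) := by
    simpa using (hGlin x (Pi.single i 1)).map_smul (w j) _
  rw [h2, hGsymm x _ (Pi.single i 1)]
  ring

lemma G_cont (hGsmooth : ∀ φ ψ, ContDiff ℝ 1 (fun x => G x φ ψ)) :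
    Continuous (fun q : (Fin n → ℝ) × (Fin n → ℝ) × (Fin n → ℝ) => G q.1 q.2.1 q.2.2) := by
  have : (fun q : (Fin n → ℝ) × (Fin n → ℝ) × (Fin n → ℝ) => G q.1 q.2.1 q.2.2)
      = fun q => ∑ i, ∑ j, q.2.1 i * q.2.2 j * G q.1 (Pi.single i 1) (Pi.single j 1) := by
    funext q; exact G_expand hGsymm hGlin _ _ _
  rw [this]
  refine continuous_finset_sum _ fun i _ => continuous_finset_sum _ fun j _ => ?_
  exact (((continuous_apply i).comp (continuous_fst.comp continuous_snd)).mul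
    ((continuous_apply j).comp (continuous_snd.comp continuous_snd))).mul
    ((hGsmooth _ _).continuous.comp continuous_fst)

lemma fderiv_G_expand (hGsmooth : ∀ φ ψ, ContDiff ℝ 1 (fun x => G x φ ψ))
    (x v w h : Fin n → ℝ) :
    fderiv ℝ (fun y => G y v w) x h
      = ∑ i, ∑ j, v i * w j * fderiv ℝ (fun y => G y (Pi.single i 1) (Pi.single j 1)) x h := by
  have he : (fun y => G y v w)
      = fun y => ∑ i, ∑ j, v i * w j * G y (Pi.single i 1) (Pi.single j 1) := by
    funext y; exact G_expand hGsymm hGlin _ _ _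
  rw [he]
  have hdiff : ∀ (i j : Fin n), DifferentiableAt ℝ
      (fun y => G y (Pi.single i 1 : Fin n → ℝ) (Pi.single j 1 : Fin n → ℝ)) x :=
    fun i j => ((hGsmooth _ _).differentiable one_ne_zero).differentiableAt
  rw [fderiv_fun_sum (fun i _ => DifferentiableAt.fun_sum (fun j _ => ((hdiff i j).const_mul _)))]
  rw [ContinuousLinearMap.sum_apply]
  refine Finset.sum_congr rfl fun i _ => ?_
  rw [fderiv_fun_sum (fun j _ => ((hdiff i j).const_mul _)), ContinuousLinearMap.sum_apply]
  refine Finset.sum_congr rfl fun j _ => ?_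
  rw [fderiv_const_mul (hdiff i j)]
  simp

end AuxExpand

section AuxSubpath

variable {n : ℕ} {G : (Fin n → ℝ) → (Fin n → ℝ) → (Fin n → ℝ) → ℝ}

lemma integrand_continuous (hGsymm : ∀ x φ ψ, G x φ ψ = G x ψ φ)
    (hGlin : ∀ x ψ, IsLinearMap ℝ (fun φ => G x φ ψ))
    (hGsmooth : ∀ φ ψ, ContDiff ℝ 1 (fun x => G x φ ψ))
    {γ : ℝ → Fin n → ℝ} (hγ : ContDiff ℝ 1 γ) :
    Continuous (fun s => Real.sqrt (G (γ s) (deriv γ s) (deriv γ s))) := by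
  have hd : Continuous (deriv γ) := hγ.continuous_deriv le_rfl
  exact ((G_cont hGsymm hGlin hGsmooth).comp
    (hγ.continuous.prodMk (hd.prodMk hd))).sqrt

lemma subpath_dist (hGsymm : ∀ x φ ψ, G x φ ψ = G x ψ φ)
    (hGlin : ∀ x ψ, IsLinearMap ℝ (fun φ => G x φ ψ))
    (hGsmooth : ∀ φ ψ, ContDiff ℝ 1 (fun x => G x φ ψ))
    {γ : ℝ → Fin n → ℝ} (hγ : ContDiff ℝ 1 γ) {τ : ℝ} (hτ0 : 0 ≤ τ) (hτ1 : τ ≤ 1) :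
    riemDistG n G (γ 0) (γ τ) ≤ pathLengthG n G γ := by
  set f : ℝ → ℝ := fun s => Real.sqrt (G (γ s) (deriv γ s) (deriv γ s)) with hf
  have hfc : Continuous f := integrand_continuous hGsymm hGlin hGsmooth hγ
  set δ : ℝ → Fin n → ℝ := fun σ => γ (τ * σ) with hδ
  have hδc : ContDiff ℝ 1 δ := hγ.comp (contDiff_const.mul contDiff_id)
  have hδd : ∀ σ : ℝ, deriv δ σ = τ • deriv γ (τ * σ) := by
    intro σ
    have h1 : HasDerivAt γ (deriv γ (τ * σ)) (τ * σ) :=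
      ((hγ.differentiable one_ne_zero) _).hasDerivAt
    have h2 : HasDerivAt (fun σ : ℝ => τ * σ) τ σ := by
      simpa using (hasDerivAt_id σ).const_mul τ
    exact (h1.scomp σ h2).deriv
  have hlen : pathLengthG n G δ = ∫ σ in (0:ℝ)..τ, f σ := by
    have : ∀ σ : ℝ, Real.sqrt (G (δ σ) (deriv δ σ) (deriv δ σ)) = τ * f (τ * σ) := by
      intro σ
      rw [hδd σ]
      show Real.sqrt (G (γ (τ * σ)) (τ • deriv γ (τ * σ)) (τ • deriv γ (τ * σ))) = _
      rw [G_smul_smul hGsymm hGlin, Real.sqrt_mul (sq_nonneg τ), Real.sqrt_sq hτ0]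
    rw [pathLengthG]
    simp_rw [this]
    rw [intervalIntegral.integral_const_mul]
    have := intervalIntegral.smul_integral_comp_mul_left (a := (0:ℝ)) (b := 1) f τ
    rw [smul_eq_mul] at this
    rw [this]
    norm_num
  have hle : (∫ σ in (0:ℝ)..τ, f σ) ≤ ∫ σ in (0:ℝ)..1, f σ := by
    refine intervalIntegral.integral_mono_interval le_rfl hτ0 hτ1 ?_ (hfc.intervalIntegrable _ _)
    filter_upwards with s using Real.sqrt_nonneg _
  calc riemDistG n G (γ 0) (γ τ) ≤ pathLengthG n G δ :=
        riemDistG_le hδc (by simp [hδ]) (by simp [hδ])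
    _ = ∫ σ in (0:ℝ)..τ, f σ := hlen
    _ ≤ pathLengthG n G γ := hle

end AuxSubpath

section AuxCore

variable {n : ℕ} {G : (Fin n → ℝ) → (Fin n → ℝ) → (Fin n → ℝ) → ℝ}
  {a : (Fin n → ℝ) → (Fin n → ℝ)}

/-- The squared-speed function along the perturbed path. -/
noncomputable def QQ (n : ℕ) (G : (Fin n → ℝ) → (Fin n → ℝ) → (Fin n → ℝ) → ℝ)
    (a : (Fin n → ℝ) → (Fin n → ℝ)) (t : ℝ) (p v : Fin n → ℝ) : ℝ :=
  G (p + t • a p) (v + t • fderiv ℝ a p v) (v + t • fderiv ℝ a p v)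

/-- Its time derivative. -/
noncomputable def DQ (n : ℕ) (G : (Fin n → ℝ) → (Fin n → ℝ) → (Fin n → ℝ) → ℝ)
    (a : (Fin n → ℝ) → (Fin n → ℝ)) (t : ℝ) (p v : Fin n → ℝ) : ℝ :=
  ∑ i, ∑ j,
    ((fderiv ℝ a p v i * (v + t • fderiv ℝ a p v) j
        + (v + t • fderiv ℝ a p v) i * fderiv ℝ a p v j)
      * G (p + t • a p) (Pi.single i 1) (Pi.single j 1)
    + (v + t • fderiv ℝ a p v) i * (v + t • fderiv ℝ a p v) j
      * fderiv ℝ (fun y => G y (Pi.single i 1) (Pi.single j 1)) (p + t • a p) (a p))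

lemma QQ_hasDerivAt (hGsymm : ∀ x φ ψ, G x φ ψ = G x ψ φ)
    (hGlin : ∀ x ψ, IsLinearMap ℝ (fun φ => G x φ ψ))
    (hGsmooth : ∀ φ ψ, ContDiff ℝ 1 (fun x => G x φ ψ))
    (ha : ContDiff ℝ 1 a) (t : ℝ) (p v : Fin n → ℝ) :
    HasDerivAt (fun τ => QQ n G a τ p v) (DQ n G a t p v) t := by
  have hrw : (fun τ => QQ n G a τ p v)
      = fun τ => ∑ i, ∑ j, (v i + τ * fderiv ℝ a p v i) * (v j + τ * fderiv ℝ a p v j)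
          * G (p + τ • a p) (Pi.single i 1) (Pi.single j 1) := by
    funext τ
    rw [QQ, G_expand hGsymm hGlin]
    refine Finset.sum_congr rfl fun i _ => Finset.sum_congr rfl fun j _ => ?_
    simp [Pi.add_apply, Pi.smul_apply, smul_eq_mul]
  rw [hrw, DQ]
  refine HasDerivAt.fun_sum fun i _ => HasDerivAt.fun_sum fun j _ => ?_
  have h1 : HasDerivAt (fun τ : ℝ => v i + τ * fderiv ℝ a p v i) (fderiv ℝ a p v i) t := by
    simpa [mul_comm] using ((hasDerivAt_id t).const_mul (fderiv ℝ a p v i)).const_add (v i)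
  have h2 : HasDerivAt (fun τ : ℝ => v j + τ * fderiv ℝ a p v j) (fderiv ℝ a p v j) t := by
    simpa [mul_comm] using ((hasDerivAt_id t).const_mul (fderiv ℝ a p v j)).const_add (v j)
  have hy : HasDerivAt (fun τ : ℝ => p + τ • a p) (a p) t := by
    simpa using ((hasDerivAt_id t).smul_const (a p)).const_add p
  have hg : HasDerivAt (fun τ : ℝ => G (p + τ • a p) (Pi.single i 1) (Pi.single j 1))
      (fderiv ℝ (fun y => G y (Pi.single i 1) (Pi.single j 1)) (p + t • a p) (a p)) t := by
    have hdg : HasFDerivAt (fun y => G y (Pi.single i 1 : Fin n → ℝ) (Pi.single j 1 : Fin n → ℝ))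
        (fderiv ℝ (fun y => G y (Pi.single i 1) (Pi.single j 1)) (p + t • a p)) (p + t • a p) :=
      (((hGsmooth _ _).differentiable one_ne_zero) _).hasFDerivAt
    exact hdg.comp_hasDerivAt t hy
  have := (h1.mul h2).mul hg
  convert this using 1
  all_goals rfl

lemma DQ_cont (hGsymm : ∀ x φ ψ, G x φ ψ = G x ψ φ)
    (hGlin : ∀ x ψ, IsLinearMap ℝ (fun φ => G x φ ψ))
    (hGsmooth : ∀ φ ψ, ContDiff ℝ 1 (fun x => G x φ ψ))
    (ha : ContDiff ℝ 1 a) :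
    Continuous (fun z : ℝ × (Fin n → ℝ) × (Fin n → ℝ) => DQ n G a z.1 z.2.1 z.2.2) := by
  have ca : Continuous (fun z : ℝ × (Fin n → ℝ) × (Fin n → ℝ) => a z.2.1) :=
    ha.continuous.comp (continuous_fst.comp continuous_snd)
  have cy : Continuous (fun z : ℝ × (Fin n → ℝ) × (Fin n → ℝ) => z.2.1 + z.1 • a z.2.1) :=
    (continuous_fst.comp continuous_snd).add (continuous_fst.smul ca)
  have cAv : Continuous (fun z : ℝ × (Fin n → ℝ) × (Fin n → ℝ) => fderiv ℝ a z.2.1 z.2.2) :=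
    ((ha.continuous_fderiv one_ne_zero).comp (continuous_fst.comp continuous_snd)).clm_apply
      (continuous_snd.comp continuous_snd)
  have cw : Continuous (fun z : ℝ × (Fin n → ℝ) × (Fin n → ℝ) =>
      z.2.2 + z.1 • fderiv ℝ a z.2.1 z.2.2) :=
    (continuous_snd.comp continuous_snd).add (continuous_fst.smul cAv)
  refine continuous_finset_sum _ fun i _ => continuous_finset_sum _ fun j _ => ?_
  have cg : Continuous (fun z : ℝ × (Fin n → ℝ) × (Fin n → ℝ) =>
      G (z.2.1 + z.1 • a z.2.1) (Pi.single i 1 : Fin n → ℝ) (Pi.single j 1 : Fin n → ℝ)) :=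
    (hGsmooth _ _).continuous.comp cy
  have cDg : Continuous (fun z : ℝ × (Fin n → ℝ) × (Fin n → ℝ) =>
      fderiv ℝ (fun y => G y (Pi.single i 1 : Fin n → ℝ) (Pi.single j 1 : Fin n → ℝ))
        (z.2.1 + z.1 • a z.2.1) (a z.2.1)) :=
    (((hGsmooth _ _).continuous_fderiv one_ne_zero).comp cy).clm_apply ca
  have capp : ∀ k : Fin n, Continuous (fun z : ℝ × (Fin n → ℝ) × (Fin n → ℝ) =>
      (z.2.2 + z.1 • fderiv ℝ a z.2.1 z.2.2) k) := fun k => (continuous_apply k).comp cw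
  have cAvk : ∀ k : Fin n, Continuous (fun z : ℝ × (Fin n → ℝ) × (Fin n → ℝ) =>
      fderiv ℝ a z.2.1 z.2.2 k) := fun k => (continuous_apply k).comp cAv
  exact ((((cAvk i).mul (capp j)).add ((capp i).mul (cAvk j))).mul cg).add
    (((capp i).mul (capp j)).mul cDg)

lemma DQ_zero (hGsymm : ∀ x φ ψ, G x φ ψ = G x ψ φ)
    (hGlin : ∀ x ψ, IsLinearMap ℝ (fun φ => G x φ ψ))
    (hGsmooth : ∀ φ ψ, ContDiff ℝ 1 (fun x => G x φ ψ))
    (ha : ContDiff ℝ 1 a) (p v : Fin n → ℝ) :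
    DQ n G a 0 p v = lieDerivG n G a p v v := by
  rw [DQ, lieDerivG]
  rw [G_expand hGsymm hGlin p (fderiv ℝ a p v) v, G_expand hGsymm hGlin p v (fderiv ℝ a p v),
    fderiv_G_expand hGsymm hGlin hGsmooth p v v (a p)]
  rw [← Finset.sum_add_distrib, ← Finset.sum_add_distrib]
  refine Finset.sum_congr rfl fun i _ => ?_
  rw [← Finset.sum_add_distrib, ← Finset.sum_add_distrib]
  refine Finset.sum_congr rfl fun j _ => ?_
  simp only [zero_smul, add_zero, smul_zero]
  ring

lemma QQ_scale (hGsymm : ∀ x φ ψ, G x φ ψ = G x ψ φ)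
    (hGlin : ∀ x ψ, IsLinearMap ℝ (fun φ => G x φ ψ))
    (t : ℝ) (p v : Fin n → ℝ) (c : ℝ) :
    QQ n G a t p (c • v) = c ^ 2 * QQ n G a t p v := by
  rw [QQ, QQ]
  have : (c • v) + t • fderiv ℝ a p (c • v) = c • (v + t • fderiv ℝ a p v) := by
    rw [(fderiv ℝ a p).map_smul]
    rw [smul_comm t c]
    rw [← smul_add]
  rw [this, G_smul_smul hGsymm hGlin]

lemma QQ_zero_v (hGlin : ∀ x ψ, IsLinearMap ℝ (fun φ => G x φ ψ)) (t : ℝ) (p : Fin n → ℝ) :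
    QQ n G a t p 0 = 0 := by
  rw [QQ]
  have h0 : (0 : Fin n → ℝ) + t • fderiv ℝ a p 0 = 0 := by
    rw [(fderiv ℝ a p).map_zero, smul_zero, add_zero]
  rw [h0]
  simpa using (hGlin _ (0 : Fin n → ℝ)).map_smul 0 0

theorem key_estimate (hGsymm : ∀ x φ ψ, G x φ ψ = G x ψ φ)
    (hGlin : ∀ x ψ, IsLinearMap ℝ (fun φ => G x φ ψ))
    (hGpos : ∀ x φ, φ ≠ 0 → 0 < G x φ φ)
    (hGsmooth : ∀ φ ψ, ContDiff ℝ 1 (fun x => G x φ ψ))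
    (ha : ContDiff ℝ 1 a)
    (hLie : ∀ p v : Fin n → ℝ, lieDerivG n G a p v v ≤ 0)
    (hn : 0 < n)
    {K : Set (Fin n → ℝ)} (hK : IsCompact K) (hKne : K.Nonempty)
    {ε : ℝ} (hε : 0 < ε) :
    ∃ δ > 0, δ ≤ 1 ∧ ∀ t ∈ Icc (0:ℝ) δ, ∀ p ∈ K, ∀ v : Fin n → ℝ,
      QQ n G a t p v ≤ (1 + ε * t) ^ 2 * QQ n G a 0 p v := by
  set S : Set (Fin n → ℝ) := Metric.sphere 0 1 with hS
  have hSne : S.Nonempty := by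
    have : Nontrivial (Fin n → ℝ) := by
      haveI : Nonempty (Fin n) := ⟨⟨0, hn⟩⟩
      infer_instance
    exact NormedSpace.sphere_nonempty.mpr zero_le_one
  have hP : IsCompact (K ×ˢ S) := hK.prod (isCompact_sphere 0 1)
  have hPne : (K ×ˢ S).Nonempty := hKne.prod hSne
  have hQ0cont : Continuous (fun pv : (Fin n → ℝ) × (Fin n → ℝ) => G pv.1 pv.2 pv.2) :=
    (G_cont hGsymm hGlin hGsmooth).comp
      (continuous_fst.prodMk (continuous_snd.prodMk continuous_snd))
  obtain ⟨⟨p₀, v₀⟩, hp₀mem, hmin⟩ := hP.exists_isMinOn hPne hQ0cont.continuousOn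
  set lam : ℝ := G p₀ v₀ v₀ with hlam
  have hv₀ : v₀ ≠ 0 := by
    intro h
    have := hp₀mem.2
    rw [h] at this
    simp [hS] at this
  have hlampos : 0 < lam := hGpos _ _ hv₀
  have hC : IsCompact (Icc (0:ℝ) 1 ×ˢ (K ×ˢ S)) := (isCompact_Icc).prod hP
  have hUC := hC.uniformContinuousOn_of_continuous
    ((DQ_cont hGsymm hGlin hGsmooth ha).continuousOn)
  rw [Metric.uniformContinuousOn_iff_le] at hUC
  obtain ⟨δ₀, hδ₀pos, hδ₀⟩ := hUC (ε * lam) (by positivity)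
  refine ⟨min δ₀ 1, lt_min hδ₀pos one_pos, min_le_right _ _, ?_⟩
  rintro t ⟨ht0, htδ⟩ p hp v
  rcases eq_or_ne v 0 with rfl | hv
  · rw [QQ_zero_v hGlin, QQ_zero_v hGlin]; simp
  · have hvn : ‖v‖ ≠ 0 := norm_ne_zero_iff.mpr hv
    have hvdecomp : v = ‖v‖ • (‖v‖⁻¹ • v) := by
      rw [smul_smul, mul_inv_cancel₀ hvn, one_smul]
    set u : Fin n → ℝ := ‖v‖⁻¹ • v with hu
    have huS : u ∈ S := by
      simp only [hS, Metric.mem_sphere, dist_zero_right, hu, norm_smul, norm_inv, norm_norm]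
      rw [inv_mul_cancel₀ hvn]
    have hscale : ∀ τ, QQ n G a τ p v = ‖v‖ ^ 2 * QQ n G a τ p u := by
      intro τ
      conv_lhs => rw [hvdecomp]
      exact QQ_scale hGsymm hGlin τ p u ‖v‖
    rw [hscale, hscale]
    have hunit : QQ n G a t p u ≤ (1 + ε * t) ^ 2 * QQ n G a 0 p u := by
      rcases eq_or_lt_of_le ht0 with rfl | htpos
      · simp
      · have hcont : ContinuousOn (fun τ => QQ n G a τ p u) (Icc 0 t) :=
          fun τ _ => (QQ_hasDerivAt hGsymm hGlin hGsmooth ha τ p u).continuousAt.continuousWithinAt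
        obtain ⟨c, hc, hceq⟩ := exists_hasDerivAt_eq_slope (fun τ => QQ n G a τ p u)
          (fun τ => DQ n G a τ p u) htpos hcont
          (fun τ _ => QQ_hasDerivAt hGsymm hGlin hGsmooth ha τ p u)
        have hQt : QQ n G a t p u = QQ n G a 0 p u + t * DQ n G a c p u := by
          rw [hceq]; field_simp; ring
        have hcmem : (c, (p, u)) ∈ Icc (0:ℝ) 1 ×ˢ (K ×ˢ S) := by
          refine ⟨⟨le_of_lt hc.1, ?_⟩, hp, huS⟩
          exact le_trans (le_of_lt hc.2) (le_trans htδ (min_le_right _ _))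
        have h0mem : ((0:ℝ), (p, u)) ∈ Icc (0:ℝ) 1 ×ˢ (K ×ˢ S) :=
          ⟨⟨le_rfl, zero_le_one⟩, hp, huS⟩
        have hdist : dist ((c, (p, u)) : ℝ × (Fin n → ℝ) × (Fin n → ℝ)) ((0:ℝ), (p, u)) ≤ δ₀ := by
          rw [Prod.dist_eq]
          refine max_le ?_ ?_
          · rw [Real.dist_eq, sub_zero, abs_of_pos hc.1]
            exact hc.2.le.trans (htδ.trans (min_le_left _ _))
          · simpa using hδ₀pos.le
        have hDQclose := hδ₀ _ hcmem _ h0mem hdist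
        rw [Real.dist_eq] at hDQclose
        have hDQc : DQ n G a c p u ≤ DQ n G a 0 p u + ε * lam := by
          have := abs_le.mp hDQclose
          linarith [this.1, this.2]
        have hDQ0 : DQ n G a 0 p u ≤ 0 := by
          rw [DQ_zero hGsymm hGlin hGsmooth ha]; exact hLie p u
        have hlamle : lam ≤ QQ n G a 0 p u := by
          have := hmin (Set.mk_mem_prod hp huS)
          rw [QQ]; simpa using this
        have hQ0nonneg : 0 ≤ QQ n G a 0 p u := le_trans (le_of_lt hlampos) hlamle
        have h1 : t * DQ n G a c p u ≤ t * (ε * lam) :=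
          mul_le_mul_of_nonneg_left (hDQc.trans (by linarith)) ht0
        have h2 : t * (ε * lam) ≤ t * (ε * QQ n G a 0 p u) :=
          mul_le_mul_of_nonneg_left (mul_le_mul_of_nonneg_left hlamle hε.le) ht0
        rw [hQt]
        nlinarith [mul_nonneg (mul_nonneg hε.le ht0) hQ0nonneg,
          mul_nonneg (mul_nonneg (mul_nonneg hε.le hε.le) (mul_nonneg ht0 ht0)) hQ0nonneg]
    nlinarith [sq_nonneg ‖v‖, hunit, sq_nonneg (1 + ε * t)]

theorem length_estimate (hGsymm : ∀ x φ ψ, G x φ ψ = G x ψ φ)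
    (hGlin : ∀ x ψ, IsLinearMap ℝ (fun φ => G x φ ψ))
    (hGpos : ∀ x φ, φ ≠ 0 → 0 < G x φ φ)
    (hGsmooth : ∀ φ ψ, ContDiff ℝ 1 (fun x => G x φ ψ))
    (ha : ContDiff ℝ 1 a)
    (hLie : ∀ p v : Fin n → ℝ, lieDerivG n G a p v v ≤ 0)
    (hn : 0 < n)
    {K : Set (Fin n → ℝ)} (hK : IsCompact K) (hKne : K.Nonempty)
    {ε : ℝ} (hε : 0 < ε) :
    ∃ δ > 0, δ ≤ 1 ∧ ∀ t ∈ Ioc (0:ℝ) δ, ∀ γ : ℝ → Fin n → ℝ, ContDiff ℝ 1 γ →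
      (∀ s ∈ Icc (0:ℝ) 1, γ s ∈ K) →
      pathLengthG n G (fun s => γ s + t • a (γ s)) ≤ (1 + ε * t) * pathLengthG n G γ := by
  obtain ⟨δ, hδpos, hδ1, hkey⟩ :=
    key_estimate hGsymm hGlin hGpos hGsmooth ha hLie hn hK hKne hε
  refine ⟨δ, hδpos, hδ1, ?_⟩
  rintro t ⟨htpos, htδ⟩ γ hγ hγK
  set η : ℝ → Fin n → ℝ := fun s => γ s + t • a (γ s) with hη
  have hηc : ContDiff ℝ 1 η := hγ.add ((ha.comp hγ).const_smul t)
  have hηd : ∀ s, deriv η s = deriv γ s + t • fderiv ℝ a (γ s) (deriv γ s) := by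
    intro s
    have h1 : HasDerivAt γ (deriv γ s) s := ((hγ.differentiable one_ne_zero) _).hasDerivAt
    have h2 : HasDerivAt (fun s => a (γ s)) (fderiv ℝ a (γ s) (deriv γ s)) s :=
      (((ha.differentiable one_ne_zero) _).hasFDerivAt).comp_hasDerivAt s h1
    exact (h1.add (h2.const_smul t)).deriv
  have honet : 0 ≤ 1 + ε * t := by positivity
  have hmono : ∀ s ∈ Icc (0:ℝ) 1,
      Real.sqrt (G (η s) (deriv η s) (deriv η s))
        ≤ (1 + ε * t) * Real.sqrt (G (γ s) (deriv γ s) (deriv γ s)) := by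
    intro s hs
    have hqq : G (η s) (deriv η s) (deriv η s) = QQ n G a t (γ s) (deriv γ s) := by
      rw [hηd s]; rfl
    have hqq0 : G (γ s) (deriv γ s) (deriv γ s) = QQ n G a 0 (γ s) (deriv γ s) := by
      rw [QQ]; simp
    rw [hqq, hqq0]
    have hk := hkey t ⟨htpos.le, htδ⟩ (γ s) (hγK s hs) (deriv γ s)
    calc Real.sqrt (QQ n G a t (γ s) (deriv γ s))
        ≤ Real.sqrt ((1 + ε * t) ^ 2 * QQ n G a 0 (γ s) (deriv γ s)) := Real.sqrt_le_sqrt hk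
      _ = (1 + ε * t) * Real.sqrt (QQ n G a 0 (γ s) (deriv γ s)) := by
          rw [Real.sqrt_mul (sq_nonneg _), Real.sqrt_sq honet]
  have hint1 : IntervalIntegrable (fun s => Real.sqrt (G (η s) (deriv η s) (deriv η s)))
      MeasureTheory.volume 0 1 :=
    (integrand_continuous hGsymm hGlin hGsmooth hηc).intervalIntegrable _ _
  have hint2 : IntervalIntegrable
      (fun s => (1 + ε * t) * Real.sqrt (G (γ s) (deriv γ s) (deriv γ s)))
      MeasureTheory.volume 0 1 :=
    (continuous_const.mul (integrand_continuous hGsymm hGlin hGsmooth hγ)).intervalIntegrable _ _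
  calc pathLengthG n G η
      ≤ ∫ s in (0:ℝ)..1, (1 + ε * t) * Real.sqrt (G (γ s) (deriv γ s) (deriv γ s)) :=
        intervalIntegral.integral_mono_on (by norm_num) hint1 hint2 hmono
    _ = (1 + ε * t) * pathLengthG n G γ := by
        rw [pathLengthG, intervalIntegral.integral_const_mul]

end AuxCore

/-- If `f(x,u) = a(x) + B(x,u)u` is weakly contractive with respect to the
complete metric `G`, `a(0) = 0`, and `V(x) = d_G(x,0)²` is C¹, then
`L_a V ≤ 0`: the drift is weakly dissipative for the squared distance to the
origin. -/
theorem stmt18 (n m : ℕ)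
    (G : (Fin n → ℝ) → (Fin n → ℝ) → (Fin n → ℝ) → ℝ)
    (hGsymm : ∀ x φ ψ, G x φ ψ = G x ψ φ)
    (hGlin : ∀ x ψ, IsLinearMap ℝ (fun φ => G x φ ψ))
    (hGpos : ∀ x φ, φ ≠ 0 → 0 < G x φ φ)
    (hGsmooth : ∀ φ ψ, ContDiff ℝ 1 (fun x => G x φ ψ))
    (hcomplete : ∀ (x : Fin n → ℝ) (r : ℝ), IsCompact {y | riemDistG n G x y ≤ r})
    (a : (Fin n → ℝ) → Fin n → ℝ) (ha : ContDiff ℝ 1 a) (ha0 : a 0 = 0)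
    (B : (Fin n → ℝ) → (Fin m → ℝ) → Matrix (Fin n) (Fin m) ℝ)
    (hfC1 : ∀ u : Fin m → ℝ, ContDiff ℝ 1 (fun y => a y + (B y u) *ᵥ u))
    (hcontr : ∀ (u : Fin m → ℝ) (x φ : Fin n → ℝ),
      lieDerivG n G (fun y => a y + (B y u) *ᵥ u) x φ φ ≤ 0)
    (hVC1 : ContDiff ℝ 1 (fun y => (riemDistG n G y 0) ^ 2)) :
    ∀ x : Fin n → ℝ, fderiv ℝ (fun y => (riemDistG n G y 0) ^ 2) x (a x) ≤ 0 := by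
  intro x
  -- trivial case n = 0
  rcases Nat.eq_zero_or_pos n with hn0 | hn
  · subst hn0
    have hax : a x = 0 := funext fun i => i.elim0
    rw [hax, map_zero]
  -- the Lie derivative hypothesis for the drift
  have hLie : ∀ p v : Fin n → ℝ, lieDerivG n G a p v v ≤ 0 := by
    intro p v
    have h := hcontr 0 p v
    have hfun : (fun y => a y + (B y 0) *ᵥ (0 : Fin m → ℝ)) = a := by
      funext y; rw [Matrix.mulVec_zero, add_zero]
    rwa [hfun] at h
  set V : (Fin n → ℝ) → ℝ := fun y => (riemDistG n G y 0) ^ 2 with hV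
  set d : ℝ := riemDistG n G x 0 with hd
  have hdnn : 0 ≤ d := riemDistG_nonneg x 0
  -- the compact set
  set K : Set (Fin n → ℝ) := {y | riemDistG n G x y ≤ d + 1} with hK
  have hKcompact : IsCompact K := hcomplete x (d + 1)
  have hxK : x ∈ K := by
    have hconst : riemDistG n G x x ≤ pathLengthG n G (fun _ : ℝ => x) :=
      riemDistG_le contDiff_const rfl rfl
    have hzero : pathLengthG n G (fun _ : ℝ => x) = 0 := by
      rw [pathLengthG]
      have : ∀ s : ℝ, Real.sqrt (G x (deriv (fun _ : ℝ => x) s) (deriv (fun _ : ℝ => x) s)) = 0 := by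
        intro s
        rw [deriv_const]
        have : G x (0 : Fin n → ℝ) (0 : Fin n → ℝ) = 0 := by
          simpa using (hGlin x 0).map_smul 0 0
        rw [this, Real.sqrt_zero]
      simp_rw [this]
      simp
    show riemDistG n G x x ≤ d + 1
    rw [hzero] at hconst
    linarith
  have hKne : K.Nonempty := ⟨x, hxK⟩
  -- the function along the curve t ↦ x + t • a x
  set F : ℝ → ℝ := fun t => V (x + t • a x) with hF
  have hFderiv : HasDerivAt F (fderiv ℝ V x (a x)) 0 := by
    have hline : HasDerivAt (fun t : ℝ => x + t • a x) (a x) 0 := by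
      simpa using ((hasDerivAt_id (0:ℝ)).smul_const (a x)).const_add x
    have hdV : HasFDerivAt V (fderiv ℝ V x) ((fun t : ℝ => x + t • a x) 0) := by
      have : x + (0:ℝ) • a x = x := by simp
      rw [show (fun t : ℝ => x + t • a x) 0 = x by simp]
      exact ((hVC1.differentiable one_ne_zero) x).hasFDerivAt
    exact hdV.comp_hasDerivAt 0 hline
  have hF0 : F 0 = d ^ 2 := by
    rw [hF]; simp [hV, hd]
  -- main quantitative bound
  have main : ∀ ε : ℝ, 0 < ε → fderiv ℝ V x (a x) ≤ 2 * ε * d ^ 2 := by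
    intro ε hε
    obtain ⟨δ, hδpos, hδ1, hlen⟩ :=
      length_estimate hGsymm hGlin hGpos hGsmooth ha hLie hn hKcompact hKne hε
    set ψ : ℝ → ℝ := fun t => (ε * d + t + ε * t ^ 2) * ((1 + ε * t) * (d + t ^ 2) + d) with hψ
    -- bound the slope for t ∈ Ioc 0 δ
    have hslope : ∀ t ∈ Ioc (0:ℝ) δ, (F t - F 0) / t ≤ ψ t := by
      rintro t ⟨htpos, htδ⟩
      obtain ⟨γ, hγ, hγ0, hγ1, hγlen⟩ := exists_path_lt (G := G) x 0 (show (0:ℝ) < t ^ 2 by positivity)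
      rw [← hd] at hγlen
      have hst : t ^ 2 ≤ 1 := by nlinarith [htδ.trans hδ1]
      have hγK : ∀ s ∈ Icc (0:ℝ) 1, γ s ∈ K := by
        intro s hs
        show riemDistG n G x (γ s) ≤ d + 1
        have := subpath_dist hGsymm hGlin hGsmooth hγ hs.1 hs.2
        rw [hγ0] at this
        linarith
      have hη := hlen t ⟨htpos, htδ⟩ γ hγ hγK
      set η : ℝ → Fin n → ℝ := fun s => γ s + t • a (γ s) with hηdef
      have hηc : ContDiff ℝ 1 η := hγ.add ((ha.comp hγ).const_smul t)
      have hη0 : η 0 = x + t • a x := by rw [hηdef]; simp [hγ0]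
      have hη1 : η 1 = 0 := by rw [hηdef]; simp [hγ1, ha0]
      have hdle : riemDistG n G (x + t • a x) 0 ≤ pathLengthG n G η :=
        riemDistG_le hηc hη0 hη1
      set u : ℝ := (1 + ε * t) * (d + t ^ 2) with hu
      have honet : (0:ℝ) < 1 + ε * t := by positivity
      have hdu : riemDistG n G (x + t • a x) 0 ≤ u := by
        calc riemDistG n G (x + t • a x) 0 ≤ pathLengthG n G η := hdle
          _ ≤ (1 + ε * t) * pathLengthG n G γ := hη
          _ ≤ u := by
              rw [hu]
              exact mul_le_mul_of_nonneg_left hγlen.le honet.le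
      have hVle : F t ≤ u ^ 2 := by
        rw [hF]
        show (riemDistG n G (x + t • a x) 0) ^ 2 ≤ u ^ 2
        exact pow_le_pow_left₀ (riemDistG_nonneg _ _) hdu 2
      have halg : u ^ 2 - d ^ 2 = t * ψ t := by rw [hu, hψ]; ring
      rw [div_le_iff₀ htpos]
      have : F t - F 0 ≤ u ^ 2 - d ^ 2 := by rw [hF0]; linarith
      rw [halg] at this
      linarith [this]
    -- take the limit t → 0⁺
    have hslopelim : Filter.Tendsto (fun t => (F t - F 0) / t) (nhdsWithin 0 (Ioi 0))
        (nhds (fderiv ℝ V x (a x))) := by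
      have h1 := hasDerivAt_iff_tendsto_slope.mp hFderiv
      have h2 : nhdsWithin (0:ℝ) (Ioi 0) ≤ nhdsWithin 0 {(0:ℝ)}ᶜ :=
        nhdsWithin_mono 0 (fun y hy => ne_of_gt hy)
      have h3 := h1.mono_left h2
      have : (fun t => (F t - F 0) / t) =ᶠ[nhdsWithin (0:ℝ) (Ioi 0)] slope F 0 := by
        filter_upwards with t
        rw [slope_def_field, sub_zero]
      exact Filter.Tendsto.congr' this.symm h3
    have hψlim : Filter.Tendsto ψ (nhdsWithin 0 (Ioi 0)) (nhds (2 * ε * d ^ 2)) := by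
      have hψcont : Continuous ψ := by
        apply Continuous.mul
        · exact (continuous_const.add continuous_id).add (continuous_const.mul (continuous_pow 2))
        · exact (((continuous_const.add (continuous_const.mul continuous_id)).mul
            (continuous_const.add (continuous_pow 2))).add continuous_const)
      have hψ0 : ψ 0 = 2 * ε * d ^ 2 := by rw [hψ]; ring
      rw [← hψ0]
      exact (hψcont.tendsto 0).mono_left nhdsWithin_le_nhds
    have hev : ∀ᶠ t in nhdsWithin (0:ℝ) (Ioi 0), (F t - F 0) / t ≤ ψ t := by
      filter_upwards [Ioc_mem_nhdsGT hδpos] with t ht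
      exact hslope t ht
    exact le_of_tendsto_of_tendsto hslopelim hψlim hev
  -- conclude
  by_contra hpos
  push_neg at hpos
  set L : ℝ := fderiv ℝ V x (a x) with hL
  have hd2 : (0:ℝ) ≤ d ^ 2 := sq_nonneg d
  have hden : (0:ℝ) < 4 * d ^ 2 + 2 := by positivity
  have hmain := main (L / (4 * d ^ 2 + 2)) (by positivity)
  have hcancel : L / (4 * d ^ 2 + 2) * (4 * d ^ 2 + 2) = L := div_mul_cancel₀ _ (ne_of_gt hden)
  nlinarith [hmain, hcancel, hd2, hpos]
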